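/- 𝔬 = 𝔬_d, where 𝔬 is the minimum size of a maximal off-branch family and 𝔬_d is the minimum size of a family 𝒪 such that for some decomposition 𝒟 of ω^{<ω} into infinite off-branch sets, 𝒪 ∪ 𝒟 is a maximal off-branch family. -/

import Mathlib

/-- A branch of the tree `ω^{<ω}`: a maximal chain in the initial-segment order. -/
def IsBranch (b : Set (List ℕ)) : Prop := IsMaxChain (· <+: ·) b

/-- A set of nodes of `ω^{<ω}` is off-branch if it meets every branch finitely. -/
def OffBranch (A : Set (List ℕ)) : Prop := ∀ b, IsBranch b → (A ∩ b).Finite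

/-- An off-branch family: an almost disjoint family of infinite off-branch sets. -/
def OffBranchFam (𝒪 : Set (Set (List ℕ))) : Prop :=
  (∀ A ∈ 𝒪, A.Infinite ∧ OffBranch A) ∧ 𝒪.Pairwise (fun A B => (A ∩ B).Finite)

/-- A maximal off-branch family. -/
def MaxOffBranchFam (𝒪 : Set (Set (List ℕ))) : Prop :=
  OffBranchFam 𝒪 ∧
  ∀ B : Set (List ℕ), B.Infinite → OffBranch B → ∃ A ∈ 𝒪, (B ∩ A).Infinite

/-- A decomposition of `ω^{<ω}`: a partition into infinitely many pairwise disjoint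
infinite sets. -/
def Decomposition (𝒟 : Set (Set (List ℕ))) : Prop :=
  𝒟.Infinite ∧ (∀ D ∈ 𝒟, D.Infinite) ∧
  𝒟.Pairwise (fun D E => Disjoint D E) ∧ ⋃₀ 𝒟 = Set.univ

/-- `𝔬`: the least cardinality of a maximal off-branch family. -/
noncomputable def frakO : Cardinal :=
  sInf {c | ∃ 𝒪 : Set (Set (List ℕ)), MaxOffBranchFam 𝒪 ∧ Cardinal.mk ↥𝒪 = c}

/-- `𝔬_d`: the least cardinality of a family `𝒪` such that for some decomposition `𝒟`
of `ω^{<ω}` into infinite off-branch sets, `𝒪 ∪ 𝒟` is a maximal off-branch family. -/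
noncomputable def frakOd : Cardinal :=
  sInf {c | ∃ 𝒪 𝒟 : Set (Set (List ℕ)), Decomposition 𝒟 ∧ (∀ D ∈ 𝒟, OffBranch D) ∧
    MaxOffBranchFam (𝒪 ∪ 𝒟) ∧ Cardinal.mk ↥𝒪 = c}

/-! ### Auxiliary material -/

namespace FrakAux

open Set

/-- The initial segment of `x : ℕ → ℕ` of length `n`, as a list. -/
def seg (x : ℕ → ℕ) (n : ℕ) : List ℕ := (List.range n).map x

lemma seg_length (x : ℕ → ℕ) (n : ℕ) : (seg x n).length = n := by simp [seg]

lemma seg_prefix (x : ℕ → ℕ) {m n : ℕ} (h : m ≤ n) : seg x m <+: seg x n := by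
  have hs : (seg x n).take m = seg x m := by
    simp [seg, ← List.map_take, List.take_range, Nat.min_eq_left h]
  rw [← hs]
  exact List.take_prefix _ _

lemma seg_succ (x : ℕ → ℕ) (n : ℕ) :
    seg x (n + 1) = x 0 :: (List.range n).map (x ∘ Nat.succ) := by
  simp [seg, List.range_succ_eq_map, List.map_map]

/-- The set of initial segments of `x` is a branch. -/
lemma isBranch_range_seg (x : ℕ → ℕ) : IsBranch (Set.range (seg x)) := by
  constructor
  · rintro _ ⟨m, rfl⟩ _ ⟨n, rfl⟩ _
    rcases le_total m n with h | h
    · exact Or.inl (seg_prefix x h)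
    · exact Or.inr (seg_prefix x h)
  · intro c hc hsub
    refine Set.Subset.antisymm hsub fun l hl => ?_
    have hseg : seg x l.length ∈ c := hsub ⟨l.length, rfl⟩
    by_cases he : l = seg x l.length
    · exact ⟨l.length, he.symm⟩
    · rcases hc hl hseg he with h | h
      · exact absurd (h.eq_of_length (by simp [seg_length])) he
      · exact absurd ((h.eq_of_length (by simp [seg_length])).symm) he

lemma OffBranch.mono {A B : Set (List ℕ)} (h : OffBranch B) (hAB : A ⊆ B) : OffBranch A :=
  fun b hb => (h b hb).subset (Set.inter_subset_inter_left _ hAB)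

lemma OffBranch.union_finite {A C : Set (List ℕ)} (h : OffBranch A) (hC : C.Finite) :
    OffBranch (A ∪ C) := by
  intro b hb
  refine ((h b hb).union hC).subset ?_
  rintro y ⟨hy | hy, hyb⟩
  · exact Or.inl ⟨hy, hyb⟩
  · exact Or.inr hy

/-- A family of lists with pairwise distinct heads is an antichain, hence off-branch. -/
lemma offBranch_of_heads {t : ℕ → List ℕ} (ht : ∀ k, ∃ r, t k = k :: r) :
    OffBranch (Set.range t) := by
  intro b hb
  apply Set.Subsingleton.finite
  rintro u ⟨⟨j, rfl⟩, hub⟩ v ⟨⟨k, rfl⟩, hvb⟩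
  by_cases h : t j = t k
  · exact h
  obtain ⟨rj, hj⟩ := ht j
  obtain ⟨rk, hk⟩ := ht k
  have hjk : j = k := by
    rcases hb.1 hub hvb h with hp | hp
    · rw [hj, hk, List.cons_prefix_cons] at hp
      exact hp.1
    · rw [hj, hk, List.cons_prefix_cons] at hp
      exact hp.1.symm
  exact (h (by rw [hjk])).elim

lemma heads_injective {t : ℕ → List ℕ} (ht : ∀ k, ∃ r, t k = k :: r) :
    Function.Injective t := by
  intro j k h
  obtain ⟨rj, hj⟩ := ht j
  obtain ⟨rk, hk⟩ := ht k
  rw [hj, hk] at h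
  exact (List.cons.injEq .. ▸ h : j = k ∧ rj = rk).1

/-- No maximal off-branch family is countable. -/
lemma not_countable_of_max {𝒪 : Set (Set (List ℕ))} (h𝒪 : MaxOffBranchFam 𝒪) :
    ¬ 𝒪.Countable := by
  intro hc
  obtain ⟨f, hfob, hfsur⟩ :
      ∃ f : ℕ → Set (List ℕ), (∀ m, OffBranch (f m)) ∧ ∀ A ∈ 𝒪, ∃ m, f m = A := by
    rcases 𝒪.eq_empty_or_nonempty with rfl | hne
    · exact ⟨fun _ => ∅, fun m b _ => by simp, by simp⟩
    · obtain ⟨f, hf⟩ := hc.exists_eq_range hne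
      refine ⟨f, fun m => (h𝒪.1.1 (f m) (hf ▸ ⟨m, rfl⟩)).2, fun A hA => ?_⟩
      rw [hf] at hA
      exact hA
  -- the branch going through `k` and then all zeros
  let xf : ℕ → ℕ → ℕ := fun k i => if i = 0 then k else 0
  have ex : ∀ k : ℕ, ∃ i : ℕ, ∀ m ≤ k, seg (xf k) (i + 1) ∉ f m := by
    intro k
    by_contra hcon
    push_neg at hcon
    have hfin : (⋃ m ∈ Set.Iic k, (f m ∩ Set.range (seg (xf k)))).Finite :=
      (Set.finite_Iic k).biUnion fun m _ => hfob m _ (isBranch_range_seg _)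
    have hsub : Set.range (fun i : ℕ => seg (xf k) (i + 1)) ⊆
        ⋃ m ∈ Set.Iic k, (f m ∩ Set.range (seg (xf k))) := by
      rintro _ ⟨i, rfl⟩
      obtain ⟨m, hm, hmem⟩ := hcon i
      exact Set.mem_biUnion hm ⟨hmem, ⟨i + 1, rfl⟩⟩
    have hinf : (Set.range fun i : ℕ => seg (xf k) (i + 1)).Infinite := by
      apply Set.infinite_range_of_injective
      intro a b hab
      have := congrArg List.length hab
      simpa [seg_length] using this
    exact hinf (hfin.subset hsub)
  choose i hi using ex
  set t : ℕ → List ℕ := fun k => seg (xf k) (i k + 1) with ht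
  have hhead : ∀ k, ∃ r, t k = k :: r := by
    intro k
    refine ⟨(List.range (i k)).map (xf k ∘ Nat.succ), ?_⟩
    rw [ht]
    simp [seg_succ, xf]
  have hBinf : (Set.range t).Infinite :=
    Set.infinite_range_of_injective (heads_injective hhead)
  have hBoff : OffBranch (Set.range t) := offBranch_of_heads hhead
  obtain ⟨A, hA, hint⟩ := h𝒪.2 _ hBinf hBoff
  obtain ⟨m, rfl⟩ := hfsur A hA
  refine hint ?_
  have hsub : Set.range t ∩ f m ⊆ t '' Set.Iio m := by
    rintro y ⟨⟨k, rfl⟩, hyf⟩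
    refine ⟨k, ?_, rfl⟩
    by_contra hk
    exact hi k m (le_of_not_gt hk) hyf
  exact ((Set.finite_Iio m).image t).subset hsub

/-- Maximal off-branch families exist (Zorn). -/
lemma exists_max : ∃ 𝒪, MaxOffBranchFam 𝒪 := by
  have hub : ∀ c ⊆ {𝒪 : Set (Set (List ℕ)) | OffBranchFam 𝒪}, IsChain (· ⊆ ·) c →
      ∃ ub ∈ {𝒪 : Set (Set (List ℕ)) | OffBranchFam 𝒪}, ∀ s ∈ c, s ⊆ ub := by
    intro c hcS hchain
    refine ⟨⋃₀ c, ⟨?_, ?_⟩, fun s hs => Set.subset_sUnion_of_mem hs⟩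
    · rintro A ⟨s, hs, hAs⟩
      exact (hcS hs).1 A hAs
    · rintro A ⟨s, hs, hAs⟩ B ⟨s', hs', hBs'⟩ hne
      rcases hchain.total hs hs' with h | h
      · exact (hcS hs').2 (h hAs) hBs' hne
      · exact (hcS hs).2 hAs (h hBs') hne
  obtain ⟨m, hm⟩ := zorn_subset {𝒪 : Set (Set (List ℕ)) | OffBranchFam 𝒪} hub
  · refine ⟨m, hm.prop, ?_⟩
    intro B hBinf hBoff
    by_contra hcon
    push_neg at hcon
    have hfin : ∀ A ∈ m, (B ∩ A).Finite := fun A hA =>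
      hcon A hA
    have hBm : B ∉ m := by
      intro hB
      exact hBinf (by simpa [Set.inter_self] using hfin B hB)
    have hins : OffBranchFam (insert B m) := by
      constructor
      · rintro A (rfl | hA)
        · exact ⟨hBinf, hBoff⟩
        · exact hm.prop.1 A hA
      · rw [Set.pairwise_insert]
        exact ⟨hm.prop.2, fun A hA _ =>
          ⟨hfin A hA, by rw [Set.inter_comm]; exact hfin A hA⟩⟩
    have : insert B m ⊆ m := hm.2 hins (Set.subset_insert B m)
    exact hBm (this (Set.mem_insert B m))

/-- From any infinite maximal off-branch family we can extract a witness for `frakOd`. -/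
lemma exists_decomp {𝒪 : Set (Set (List ℕ))} (hmax : MaxOffBranchFam 𝒪) (hinf : 𝒪.Infinite) :
    ∃ 𝒪' 𝒟 : Set (Set (List ℕ)), 𝒪' ⊆ 𝒪 ∧ Decomposition 𝒟 ∧ (∀ D ∈ 𝒟, OffBranch D) ∧
      MaxOffBranchFam (𝒪' ∪ 𝒟) := by
  obtain ⟨⟨hmem, hpair⟩, hmax2⟩ := hmax
  let E : ℕ ↪ ↥𝒪 := Set.Infinite.natEmbedding 𝒪 hinf
  let A : ℕ → Set (List ℕ) := fun n => (E n : Set (List ℕ))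
  have hAmem : ∀ n, A n ∈ 𝒪 := fun n => (E n).2
  have hAinj : Function.Injective A := fun a b h => E.injective (Subtype.coe_injective h)
  have hAfin : ∀ {m n : ℕ}, m ≠ n → (A m ∩ A n).Finite := fun {m n} h =>
    hpair (hAmem m) (hAmem n) (fun he => h (hAinj he))
  let U : ℕ → Set (List ℕ) := fun n => ⋃ m ∈ Set.Iio n, A m
  let D' : ℕ → Set (List ℕ) := fun n => A n \ U n
  have hUfin : ∀ n, (A n ∩ U n).Finite := by
    intro n
    have he : A n ∩ U n = ⋃ m ∈ Set.Iio n, (A n ∩ A m) := by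
      simp only [U, Set.inter_iUnion]
    rw [he]
    exact (Set.finite_Iio n).biUnion fun m hm => hAfin (ne_of_gt hm)
  have hD'inf : ∀ n, (D' n).Infinite := by
    intro n
    have h1 : A n \ (A n ∩ U n) = D' n := Set.diff_self_inter
    rw [← h1]
    exact ((hmem _ (hAmem n)).1).diff (hUfin n)
  let R : Set (List ℕ) := Set.univ \ ⋃ n, D' n
  let Rn : ℕ → Set (List ℕ) := fun n => {s ∈ R | Encodable.encode s = n}
  have hRnfin : ∀ n, (Rn n).Finite := by
    intro n
    apply Set.Subsingleton.finite
    rintro u ⟨-, hu⟩ v ⟨-, hv⟩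
    exact Encodable.encode_injective (hu.trans hv.symm)
  let D : ℕ → Set (List ℕ) := fun n => D' n ∪ Rn n
  have hD'subA : ∀ n, D' n ⊆ A n := fun n => Set.diff_subset
  have hD'disj : ∀ {m n : ℕ}, m < n → Disjoint (D' m) (D' n) := by
    intro m n hmn
    rw [Set.disjoint_left]
    intro x hxm hxn
    exact hxn.2 (Set.mem_biUnion hmn (hD'subA m hxm))
  have hRdisjD' : ∀ m n, Disjoint (Rn m) (D' n) := by
    intro m n
    rw [Set.disjoint_left]
    intro x hxm hxn
    exact hxm.1.2 (Set.mem_iUnion.2 ⟨n, hxn⟩)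
  have hDdisj : ∀ {m n : ℕ}, m ≠ n → Disjoint (D m) (D n) := by
    intro m n hmn
    apply Set.disjoint_union_left.2
    constructor
    · apply Set.disjoint_union_right.2
      refine ⟨?_, (hRdisjD' n m).symm⟩
      rcases hmn.lt_or_gt with h | h
      · exact hD'disj h
      · exact (hD'disj h).symm
    · apply Set.disjoint_union_right.2
      refine ⟨hRdisjD' m n, ?_⟩
      rw [Set.disjoint_left]
      rintro x ⟨-, hxm⟩ ⟨-, hxn⟩
      exact hmn (hxm ▸ hxn ▸ rfl)
  have hDinf : ∀ n, (D n).Infinite := fun n => (hD'inf n).mono Set.subset_union_left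
  have hDoff : ∀ n, OffBranch (D n) := fun n =>
    OffBranch.union_finite (OffBranch.mono (hmem _ (hAmem n)).2 (hD'subA n)) (hRnfin n)
  have hDinj : Function.Injective D := by
    intro a b h
    by_contra hne
    have := hDdisj hne
    rw [h, disjoint_self] at this
    exact (hDinf b).nonempty.ne_empty this
  have hcover : ⋃ n, D n = Set.univ := by
    have hRn : ⋃ n, Rn n = R := by
      apply Set.Subset.antisymm
      · exact Set.iUnion_subset fun n x hx => hx.1
      · intro x hx
        exact Set.mem_iUnion.2 ⟨Encodable.encode x, hx, rfl⟩
    rw [Set.iUnion_union_distrib, hRn]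
    rw [Set.union_diff_cancel (Set.subset_univ _)]
  refine ⟨𝒪 \ Set.range A, Set.range D, Set.diff_subset, ?_, ?_, ?_⟩
  · refine ⟨Set.infinite_range_of_injective hDinj, ?_, ?_, ?_⟩
    · rintro _ ⟨n, rfl⟩
      exact hDinf n
    · rintro _ ⟨a, rfl⟩ _ ⟨b, rfl⟩ hne
      exact hDdisj fun h => hne (by rw [h])
    · rw [Set.sUnion_range]
      exact hcover
  · rintro _ ⟨n, rfl⟩
    exact hDoff n
  · constructor
    constructor
    · rintro X (⟨hX, -⟩ | ⟨n, rfl⟩)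
      · exact hmem X hX
      · exact ⟨hDinf n, hDoff n⟩
    · have key : ∀ X ∈ 𝒪 \ Set.range A, ∀ n, (X ∩ D n).Finite := by
        rintro X ⟨hX, hXA⟩ n
        have h1 : (X ∩ A n).Finite :=
          hpair hX (hAmem n) (fun he => hXA ⟨n, he.symm⟩)
        refine ((h1.union (hRnfin n)).subset ?_)
        rintro y ⟨hyX, hyD | hyR⟩
        · exact Or.inl ⟨hyX, hD'subA n hyD⟩
        · exact Or.inr hyR
      rintro X (hX | ⟨a, rfl⟩) Y (hY | ⟨b, rfl⟩) hne
      · exact hpair hX.1 hY.1 hne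
      · exact key X hX b
      · rw [Set.inter_comm]
        exact key Y hY a
      · rw [Set.disjoint_iff_inter_eq_empty.mp (hDdisj fun h => hne (by rw [h]))]
        exact Set.finite_empty
    · intro B hBinf hBoff
      obtain ⟨A₀, hA₀, hBA₀⟩ := hmax2 B hBinf hBoff
      by_cases hr : A₀ ∈ Set.range A
      · obtain ⟨n, rfl⟩ := hr
        refine ⟨D n, Or.inr ⟨n, rfl⟩, ?_⟩
        have h1 : A n \ D' n = A n ∩ U n := Set.diff_diff_right_self (A n) (U n)
        have hsplit : B ∩ A n ⊆ (B ∩ D' n) ∪ (A n ∩ U n) := by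
          rintro x ⟨hxB, hxA⟩
          by_cases hxU : x ∈ U n
          · exact Or.inr ⟨hxA, hxU⟩
          · exact Or.inl ⟨hxB, hxA, hxU⟩
        have h2 : (B ∩ D' n).Infinite := by
          by_contra hfin
          rw [Set.not_infinite] at hfin
          exact hBA₀ ((hfin.union (hUfin n)).subset hsplit)
        exact h2.mono (Set.inter_subset_inter_right B Set.subset_union_left)
      · exact ⟨A₀, Or.inl ⟨hA₀, hr⟩, hBA₀⟩

end FrakAux

/-- `𝔬 = 𝔬_d`. -/
theorem frakO_eq_frakOd : frakO = frakOd := by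
  classical
  obtain ⟨𝒪₀, h𝒪₀⟩ := FrakAux.exists_max
  have hSO : {c | ∃ 𝒪 : Set (Set (List ℕ)), MaxOffBranchFam 𝒪 ∧ Cardinal.mk ↥𝒪 = c}.Nonempty :=
    ⟨_, 𝒪₀, h𝒪₀, rfl⟩
  obtain ⟨𝒪₁, h𝒪₁, hmk₁⟩ := csInf_mem hSO
  have h𝒪₁inf : 𝒪₁.Infinite := fun hfin =>
    FrakAux.not_countable_of_max h𝒪₁ hfin.countable
  obtain ⟨𝒪', 𝒟, hsub, hdec, hob, hmax⟩ := FrakAux.exists_decomp h𝒪₁ h𝒪₁inf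
  have hSOd : {c | ∃ 𝒪 𝒟 : Set (Set (List ℕ)), Decomposition 𝒟 ∧ (∀ D ∈ 𝒟, OffBranch D) ∧
      MaxOffBranchFam (𝒪 ∪ 𝒟) ∧ Cardinal.mk ↥𝒪 = c}.Nonempty :=
    ⟨_, 𝒪', 𝒟, hdec, hob, hmax, rfl⟩
  apply le_antisymm
  · -- frakO ≤ frakOd
    obtain ⟨𝒪₂, 𝒟₂, hdec₂, hob₂, hmax₂, hmk₂⟩ := csInf_mem hSOd
    have h1 : frakO ≤ Cardinal.mk ↥(𝒪₂ ∪ 𝒟₂) :=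
      csInf_le (OrderBot.bddBelow _) ⟨_, hmax₂, rfl⟩
    have h𝒟c : Cardinal.mk ↥𝒟₂ ≤ Cardinal.aleph0 := by
      have hne : ∀ D : ↥𝒟₂, (D : Set (List ℕ)).Nonempty := fun D =>
        (hdec₂.2.1 D D.2).nonempty
      have hinj : Function.Injective (fun D : ↥𝒟₂ => (hne D).some) := by
        intro D E h
        apply Subtype.ext
        by_contra hDE
        have hd := hdec₂.2.2.1 D.2 E.2 (fun he => hDE (by exact he))
        have h' : (hne D).some = (hne E).some := h
        have h1 : (hne D).some ∈ (D : Set (List ℕ)) := (hne D).some_mem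
        rw [h'] at h1
        exact Set.disjoint_left.mp hd h1 ((hne E).some_mem)
      calc Cardinal.mk ↥𝒟₂ ≤ Cardinal.mk (List ℕ) := Cardinal.mk_le_of_injective hinj
        _ ≤ Cardinal.aleph0 := Cardinal.mk_le_aleph0
    have hnc : ¬ (𝒪₂ ∪ 𝒟₂).Countable := FrakAux.not_countable_of_max hmax₂
    have hbig : ¬ Cardinal.mk ↥(𝒪₂ ∪ 𝒟₂) ≤ Cardinal.aleph0 := fun hle =>
      hnc (Set.countable_coe_iff.mp (Cardinal.mk_le_aleph0_iff.mp hle))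
    have h𝒪₂big : Cardinal.aleph0 ≤ Cardinal.mk ↥𝒪₂ := by
      by_contra hlt
      push_neg at hlt
      refine hbig ((Cardinal.mk_union_le _ _).trans ?_)
      calc Cardinal.mk ↥𝒪₂ + Cardinal.mk ↥𝒟₂ ≤ Cardinal.aleph0 + Cardinal.aleph0 :=
            add_le_add hlt.le h𝒟c
        _ = Cardinal.aleph0 := Cardinal.aleph0_add_aleph0
    calc frakO ≤ Cardinal.mk ↥(𝒪₂ ∪ 𝒟₂) := h1
      _ ≤ Cardinal.mk ↥𝒪₂ + Cardinal.mk ↥𝒟₂ := Cardinal.mk_union_le _ _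
      _ ≤ Cardinal.mk ↥𝒪₂ + Cardinal.aleph0 := add_le_add le_rfl h𝒟c
      _ = Cardinal.mk ↥𝒪₂ := Cardinal.add_eq_left h𝒪₂big h𝒪₂big
      _ = frakOd := hmk₂
  · -- frakOd ≤ frakO
    calc frakOd ≤ Cardinal.mk ↥𝒪' :=
          csInf_le (OrderBot.bddBelow _) ⟨𝒪', 𝒟, hdec, hob, hmax, rfl⟩
      _ ≤ Cardinal.mk ↥𝒪₁ := Cardinal.mk_le_mk_of_subset hsub
      _ = frakO := hmk₁
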